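/- Directedness of Weil algebras: let 𝕂 be a field. For any two Weil algebras A_1 and A_2 over 𝕂 there exist a Weil algebra A over 𝕂 and surjective unital 𝕂-algebra homomorphisms A → A_1 and A → A_2. -/

import Mathlib

universe u v w

open scoped TensorProduct

theorem weil_scalar_unique {𝕂 : Type*} [Field 𝕂] {A : Type*} [CommRing A] [Algebra 𝕂 A]
    [Nontrivial A] {a : A} {c c' : 𝕂} (h1 : IsNilpotent (a - algebraMap 𝕂 A c))
    (h2 : IsNilpotent (a - algebraMap 𝕂 A c')) : c = c' := by
  have h3 : IsNilpotent (algebraMap 𝕂 A (c' - c)) := by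
    have := (Commute.all _ _).isNilpotent_sub h1 h2
    simpa [map_sub, sub_sub_sub_cancel_left] using this
  obtain ⟨n, hn⟩ := h3
  rw [← map_pow] at hn
  have : (c' - c) ^ n = 0 := (algebraMap 𝕂 A).injective (by simpa using hn)
  have := IsNilpotent.eq_zero ⟨n, this⟩
  exact (sub_eq_zero.mp this).symm

noncomputable def weilCounit {𝕂 : Type*} [Field 𝕂] (A : Type*) [CommRing A] [Algebra 𝕂 A]
    [Nontrivial A] (h : ∀ a : A, ∃ c : 𝕂, IsNilpotent (a - algebraMap 𝕂 A c)) :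
    A →ₐ[𝕂] 𝕂 where
  toFun a := (h a).choose
  map_one' := weil_scalar_unique ((h 1).choose_spec) (by simp)
  map_mul' a b := by
    refine weil_scalar_unique ((h (a*b)).choose_spec) ?_
    have ha := (h a).choose_spec
    have hb := (h b).choose_spec
    have key : a * b - algebraMap 𝕂 A ((h a).choose * (h b).choose)
        = (a - algebraMap 𝕂 A (h a).choose) * b
          + algebraMap 𝕂 A (h a).choose * (b - algebraMap 𝕂 A (h b).choose) := by
      ring_nf
      simp [map_mul]
    rw [key]
    exact (Commute.all _ _).isNilpotent_add ((Commute.all _ _).isNilpotent_mul_right ha)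
      ((Commute.all _ _).isNilpotent_mul_left hb)
  map_zero' := weil_scalar_unique ((h 0).choose_spec) (by simp)
  map_add' a b := by
    refine weil_scalar_unique ((h (a+b)).choose_spec) ?_
    have key : a + b - algebraMap 𝕂 A ((h a).choose + (h b).choose)
        = (a - algebraMap 𝕂 A (h a).choose) + (b - algebraMap 𝕂 A (h b).choose) := by
      simp [map_add]; ring
    rw [key]
    exact (Commute.all _ _).isNilpotent_add ((h a).choose_spec) ((h b).choose_spec)
  commutes' c := weil_scalar_unique ((h (algebraMap 𝕂 A c)).choose_spec) (by simp)

/-- **Directedness of Weil algebras**: any two Weil algebras `A₁`, `A₂` over a field `𝕂`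
(nontrivial finite-dimensional commutative unital `𝕂`-algebras in which every element
differs from a scalar by a nilpotent) admit a common Weil algebra `A` together with
surjective unital `𝕂`-algebra homomorphisms `A → A₁` and `A → A₂`. -/
theorem weil_algebras_directed {𝕂 : Type u} [Field 𝕂]
    (A₁ : Type v) [CommRing A₁] [Algebra 𝕂 A₁] [Nontrivial A₁] [FiniteDimensional 𝕂 A₁]
    (hA₁ : ∀ a : A₁, ∃ c : 𝕂, IsNilpotent (a - algebraMap 𝕂 A₁ c))
    (A₂ : Type w) [CommRing A₂] [Algebra 𝕂 A₂] [Nontrivial A₂] [FiniteDimensional 𝕂 A₂]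
    (hA₂ : ∀ a : A₂, ∃ c : 𝕂, IsNilpotent (a - algebraMap 𝕂 A₂ c)) :
    ∃ (A : Type (max v w)) (_ : CommRing A) (_ : Algebra 𝕂 A),
      Nontrivial A ∧ FiniteDimensional 𝕂 A ∧
      (∀ a : A, ∃ c : 𝕂, IsNilpotent (a - algebraMap 𝕂 A c)) ∧
      ∃ (f : A →ₐ[𝕂] A₁) (g : A →ₐ[𝕂] A₂),
        Function.Surjective f ∧ Function.Surjective g := by
  classical
  set ε₁ : A₁ →ₐ[𝕂] 𝕂 := weilCounit A₁ hA₁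
  set ε₂ : A₂ →ₐ[𝕂] 𝕂 := weilCounit A₂ hA₂
  refine ⟨A₁ ⊗[𝕂] A₂, inferInstance, inferInstance, ?_, inferInstance, ?_, ?_⟩
  · exact (Algebra.TensorProduct.productMap (AlgHom.id 𝕂 A₁)
      ((Algebra.ofId 𝕂 A₁).comp ε₂)).toRingHom.domain_nontrivial
  · -- nilpotent condition
    intro x
    induction x using TensorProduct.induction_on with
    | zero => exact ⟨0, by simp⟩
    | tmul a b =>
      obtain ⟨c, hc⟩ := hA₁ a
      obtain ⟨d, hd⟩ := hA₂ b
      refine ⟨c * d, ?_⟩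
      have hmap : algebraMap 𝕂 (A₁ ⊗[𝕂] A₂) (c * d)
          = (algebraMap 𝕂 A₁ c) ⊗ₜ[𝕂] (algebraMap 𝕂 A₂ d) := by
        rw [Algebra.TensorProduct.algebraMap_apply, map_mul, mul_comm, ← Algebra.smul_def,
          TensorProduct.smul_tmul]
        simp [Algebra.algebraMap_eq_smul_one]
      have key : a ⊗ₜ[𝕂] b - algebraMap 𝕂 (A₁ ⊗[𝕂] A₂) (c * d)
          = (a - algebraMap 𝕂 A₁ c) ⊗ₜ[𝕂] b
            + (algebraMap 𝕂 A₁ c) ⊗ₜ[𝕂] (b - algebraMap 𝕂 A₂ d) := by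
        rw [hmap, TensorProduct.sub_tmul, TensorProduct.tmul_sub]; ring
      rw [key]
      refine (Commute.all _ _).isNilpotent_add ?_ ?_
      · obtain ⟨n, hn⟩ := hc
        exact ⟨n, by rw [Algebra.TensorProduct.tmul_pow, hn, TensorProduct.zero_tmul]⟩
      · obtain ⟨n, hn⟩ := hd
        exact ⟨n, by rw [Algebra.TensorProduct.tmul_pow, hn, TensorProduct.tmul_zero]⟩
    | add x y hx hy =>
      obtain ⟨c, hc⟩ := hx
      obtain ⟨d, hd⟩ := hy
      refine ⟨c + d, ?_⟩
      have key : x + y - algebraMap 𝕂 (A₁ ⊗[𝕂] A₂) (c + d)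
          = (x - algebraMap 𝕂 _ c) + (y - algebraMap 𝕂 _ d) := by
        rw [map_add]; ring
      rw [key]
      exact (Commute.all _ _).isNilpotent_add hc hd
  · refine ⟨Algebra.TensorProduct.productMap (AlgHom.id 𝕂 A₁) ((Algebra.ofId 𝕂 A₁).comp ε₂),
      Algebra.TensorProduct.productMap ((Algebra.ofId 𝕂 A₂).comp ε₁) (AlgHom.id 𝕂 A₂), ?_, ?_⟩
    · intro a
      exact ⟨a ⊗ₜ 1, by simp [Algebra.TensorProduct.productMap_apply_tmul]⟩
    · intro b
      exact ⟨1 ⊗ₜ b, by simp [Algebra.TensorProduct.productMap_apply_tmul]⟩
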